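/- Let H ≤ F_n (n ≥ 2) be of index d with Schreier graph transition matrix A of period h > 1. Then h divides d. -/

import Mathlib

/-- If the transition matrix of the Schreier graph of `H ≤ F_n` (`n ≥ 2`) of index `d`
has period `h > 1`, then `h` divides `d`. The period is characterised as the gcd of
all `m ≥ 1` with `(A ^ m)_{ii} > 0` at the basepoint. -/
theorem schreier_period_divides_index
    (n d : ℕ) (hn : 2 ≤ n)
    (H : Subgroup (FreeGroup (Fin n)))
    (c : FreeGroup (Fin n) → Fin d)
    (hcsurj : Function.Surjective c)
    (hc : ∀ x y : FreeGroup (Fin n), c x = c y ↔ x * y⁻¹ ∈ H)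
    (A : Matrix (Fin d) (Fin d) ℕ)
    (hA : ∀ i j, A i j =
      Set.ncard {a : Fin n | ∃ g, c g = i ∧ c (g * FreeGroup.of a) = j})
    (h : ℕ) (hh1 : 1 < h)
    (hdvd : ∀ m : ℕ, 0 < m → 0 < (A ^ m) (c 1) (c 1) → h ∣ m)
    (hgcd : ∀ e : ℕ, (∀ m : ℕ, 0 < m → 0 < (A ^ m) (c 1) (c 1) → e ∣ m) → e ∣ h) :
    h ∣ d := by
  classical
  -- choose coset representatives
  choose rep hrep using hcsurj
  -- the permutation action of each generator on cosets
  set σ : Fin n → Fin d → Fin d := fun a i => c (rep i * FreeGroup.of a) with hσ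
  have key : ∀ (a : Fin n) (g : FreeGroup (Fin n)), c (g * FreeGroup.of a) = σ a (c g) := by
    intro a g
    have h1 : rep (c g) * g⁻¹ ∈ H := (hc _ _).1 (hrep (c g))
    have h2 : (g * FreeGroup.of a) * (rep (c g) * FreeGroup.of a)⁻¹ ∈ H := by
      have : (g * FreeGroup.of a) * (rep (c g) * FreeGroup.of a)⁻¹
          = (rep (c g) * g⁻¹)⁻¹ := by group
      rw [this]
      exact H.inv_mem h1
    exact (hc _ _).2 h2
  have σinj : ∀ a, Function.Injective (σ a) := by
    intro a i j hij
    have h1 : (rep i * FreeGroup.of a) * (rep j * FreeGroup.of a)⁻¹ ∈ H := (hc _ _).1 hij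
    have h2 : rep i * (rep j)⁻¹ ∈ H := by
      have : rep i * (rep j)⁻¹
          = (rep i * FreeGroup.of a) * (rep j * FreeGroup.of a)⁻¹ := by group
      rw [this]; exact h1
    have := (hc _ _).2 h2
    rw [hrep i, hrep j] at this
    exact this
  have σsurj : ∀ a, Function.Surjective (σ a) :=
    fun a => (Finite.injective_iff_surjective).1 (σinj a)
  -- applying a list of generators
  set app : List (Fin n) → Fin d → Fin d :=
    fun L i => L.foldl (fun x a => σ a x) i with happ
  have app_nil : ∀ i, app [] i = i := fun _ => rfl
  have app_cons : ∀ a L i, app (a :: L) i = app L (σ a i) := fun _ _ _ => rfl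
  have app_append : ∀ L L' i, app (L ++ L') i = app L' (app L i) := by
    intro L L' i
    simp [happ, List.foldl_append]
  have app_inj : ∀ L, Function.Injective (app L) := by
    intro L
    induction L with
    | nil => exact fun x y hxy => hxy
    | cons a L ih =>
      intro x y hxy
      rw [app_cons, app_cons] at hxy
      exact σinj a (ih hxy)
  -- positivity of a single entry of A
  have hA1 : ∀ i j, 0 < A i j ↔ ∃ a, σ a i = j := by
    intro i j
    have hset : {a : Fin n | ∃ g, c g = i ∧ c (g * FreeGroup.of a) = j}
        = {a : Fin n | σ a i = j} := by
      ext a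
      constructor
      · rintro ⟨g, rfl, hg2⟩
        simpa [key a g] using hg2
      · intro ha
        exact ⟨rep i, hrep i, by simpa [key a (rep i), hrep i] using ha⟩
    rw [hA i j, hset]
    rw [Set.ncard_pos (Set.toFinite _)]
    exact ⟨fun ⟨a, ha⟩ => ⟨a, ha⟩, fun ⟨a, ha⟩ => ⟨a, ha⟩⟩
  -- positivity of entries of powers ↔ existence of walks
  have reach : ∀ (m : ℕ) (i j : Fin d),
      0 < (A ^ m) i j ↔ ∃ L : List (Fin n), L.length = m ∧ app L i = j := by
    intro m
    induction m with
    | zero =>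
      intro i j
      simp only [pow_zero, Matrix.one_apply]
      constructor
      · intro hpos
        by_cases hij : i = j
        · exact ⟨[], rfl, by rw [app_nil, hij]⟩
        · simp [hij] at hpos
      · rintro ⟨L, hL, hLij⟩
        rw [List.length_eq_zero_iff] at hL
        subst hL
        rw [app_nil] at hLij
        simp [hLij]
    | succ m ih =>
      intro i j
      rw [pow_succ']
      rw [Matrix.mul_apply]
      constructor
      · intro hpos
        have : ∃ k ∈ Finset.univ, 0 < A i k * (A ^ m) k j := by
          by_contra hcon
          push_neg at hcon
          have : ∑ k, A i k * (A ^ m) k j = 0 :=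
            Finset.sum_eq_zero fun k hk => Nat.eq_zero_of_le_zero (hcon k hk)
          omega
        obtain ⟨k, -, hk⟩ := this
        have h1 : 0 < A i k := Nat.pos_of_ne_zero (fun h0 => by simp [h0] at hk)
        have h2 : 0 < (A ^ m) k j := Nat.pos_of_ne_zero (fun h0 => by simp [h0] at hk)
        obtain ⟨a, ha⟩ := (hA1 i k).1 h1
        obtain ⟨L, hLlen, hLkj⟩ := (ih k j).1 h2
        exact ⟨a :: L, by simp [hLlen], by rw [app_cons, ha]; exact hLkj⟩
      · rintro ⟨L, hLlen, hLij⟩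
        cases L with
        | nil => simp at hLlen
        | cons a L =>
          have hLlen' : L.length = m := by simpa using hLlen
          rw [app_cons] at hLij
          have h1 : 0 < A i (σ a i) := (hA1 i (σ a i)).2 ⟨a, rfl⟩
          have h2 : 0 < (A ^ m) (σ a i) j := (ih (σ a i) j).2 ⟨L, hLlen', hLij⟩
          calc (0 : ℕ) < A i (σ a i) * (A ^ m) (σ a i) j := Nat.mul_pos h1 h2
            _ ≤ ∑ k, A i k * (A ^ m) k j :=
              Finset.single_le_sum (f := fun k => A i k * (A ^ m) k j)
                (fun k _ => Nat.zero_le _) (Finset.mem_univ _)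
  -- a nonempty list realising the identity
  have idlist : ∃ E : List (Fin n), 0 < E.length ∧ ∀ i, app E i = i := by
    have a0 : Fin n := ⟨0, by omega⟩
    set e : Equiv.Perm (Fin d) := Equiv.ofBijective (σ a0) ⟨σinj a0, σsurj a0⟩ with he
    have hpow : ∀ (k : ℕ) (i : Fin d), (e ^ k) i = app (List.replicate k a0) i := by
      intro k
      induction k with
      | zero => intro i; simp [app_nil]
      | succ k ih =>
        intro i
        rw [pow_succ]
        have : List.replicate (k + 1) a0 = a0 :: List.replicate k a0 := rfl
        rw [this, app_cons, ← ih (σ a0 i)]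
        rfl
    refine ⟨List.replicate (orderOf e) a0, by simp [orderOf_pos e], fun i => ?_⟩
    rw [← hpow (orderOf e) i, pow_orderOf_eq_one e]
    rfl
  -- inverse walks
  have inv_reach : ∀ (L : List (Fin n)) (i : Fin d),
      ∃ L' : List (Fin n), 0 < L'.length ∧ app L' (app L i) = i := by
    intro L i
    obtain ⟨E, hE1, hE2⟩ := idlist
    set e : Equiv.Perm (Fin d) := Equiv.ofBijective (app L) ⟨app_inj L, (Finite.injective_iff_surjective).1 (app_inj L)⟩ with he
    have hpow : ∀ (k : ℕ) (x : Fin d), (e ^ k) x = app (List.flatten (List.replicate k L)) x := by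
      intro k
      induction k with
      | zero => intro x; simp [app_nil]
      | succ k ih =>
        intro x
        rw [pow_succ]
        have : List.replicate (k + 1) L = L :: List.replicate k L := rfl
        rw [this, List.flatten_cons, app_append, ← ih (app L x)]
        rfl
    refine ⟨List.flatten (List.replicate (orderOf e - 1) L) ++ E, by simp [hE1], ?_⟩
    rw [app_append, ← hpow (orderOf e - 1) (app L i)]
    have : (e ^ (orderOf e - 1)) (app L i) = (e ^ (orderOf e - 1)) (e i) := rfl
    rw [this, ← Equiv.Perm.mul_apply, ← pow_succ]
    have ho : orderOf e - 1 + 1 = orderOf e := Nat.succ_pred_eq_of_pos (orderOf_pos e)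
    rw [ho, pow_orderOf_eq_one e]
    exact hE2 i
  -- every coset is reachable from the basepoint by a nonempty positive walk
  have reach_all : ∀ g : FreeGroup (Fin n), ∀ x : FreeGroup (Fin n),
      ∃ L : List (Fin n), app L (c x) = c (x * g) := by
    intro g
    induction g using FreeGroup.induction_on with
    | C1 => exact fun x => ⟨[], by rw [app_nil, mul_one]⟩
    | of a =>
      intro x
      refine ⟨[a], ?_⟩
      show σ a (c x) = c (x * FreeGroup.of a)
      exact (key a x).symm
    | inv_of a _ =>
      intro x
      obtain ⟨L', hL1, hL2⟩ := inv_reach [a] (c (x * (FreeGroup.of a)⁻¹))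
      refine ⟨L', ?_⟩
      have : app [a] (c (x * (FreeGroup.of a)⁻¹)) = c x := by
        rw [app_cons, app_nil, ← key]
        congr 1
        group
      rw [this] at hL2
      exact hL2
    | mul g1 g2 ih1 ih2 =>
      intro x
      obtain ⟨L1, hL1⟩ := ih1 x
      obtain ⟨L2, hL2⟩ := ih2 (x * g1)
      exact ⟨L1 ++ L2, by rw [app_append, hL1, hL2, mul_assoc]⟩
  have exists_m : ∀ i : Fin d, ∃ m : ℕ, 0 < m ∧ 0 < (A ^ m) (c 1) i := by
    intro i
    obtain ⟨g, hg⟩ : ∃ g, c g = i := ⟨rep i, hrep i⟩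
    obtain ⟨L, hL⟩ := reach_all g 1
    obtain ⟨E, hE1, hE2⟩ := idlist
    refine ⟨(E ++ L).length, by simp; omega, (reach _ _ _).2 ⟨E ++ L, rfl, ?_⟩⟩
    rw [app_append, hE2, hL, one_mul, hg]
  -- well-definedness of the residue of walk lengths mod h
  have ret : ∀ i : Fin d, ∀ m : ℕ, 0 < m → 0 < (A ^ m) (c 1) i →
      ∀ m' : ℕ, 0 < m' → 0 < (A ^ m') (c 1) i → (m : ZMod h) = (m' : ZMod h) := by
    intro i m hm hAm m' hm' hAm'
    obtain ⟨L, hLlen, hLi⟩ := (reach m (c 1) i).1 hAm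
    obtain ⟨L', hL'len, hL'i⟩ := (reach m' (c 1) i).1 hAm'
    obtain ⟨K, hK1, hK2⟩ := inv_reach L (c 1)
    rw [hLi] at hK2
    have hret : ∀ X : List (Fin n), app X (c 1) = i →
        0 < X.length → h ∣ X.length + K.length := by
      intro X hX hX1
      apply hdvd _ (by omega)
      refine (reach _ _ _).2 ⟨X ++ K, by simp, ?_⟩
      rw [app_append, hX, hK2]
    have d1 : h ∣ m + K.length := hLlen ▸ hret L hLi (hLlen ▸ hm)
    have d2 : h ∣ m' + K.length := hL'len ▸ hret L' hL'i (hL'len ▸ hm')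
    haveI : NeZero h := ⟨by omega⟩
    have e1 : ((m + K.length : ℕ) : ZMod h) = 0 := (ZMod.natCast_eq_zero_iff _ _).2 d1
    have e2 : ((m' + K.length : ℕ) : ZMod h) = 0 := (ZMod.natCast_eq_zero_iff _ _).2 d2
    push_cast at e1 e2
    linear_combination e1 - e2
  haveI : NeZero h := ⟨by omega⟩
  -- the residue class function
  set f : Fin d → ZMod h := fun i => (((exists_m i).choose : ℕ) : ZMod h) with hfdef
  have hf : ∀ (i : Fin d) (m : ℕ), 0 < m → 0 < (A ^ m) (c 1) i → f i = (m : ZMod h) := by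
    intro i m hm hAm
    exact ret i _ (exists_m i).choose_spec.1 (exists_m i).choose_spec.2 m hm hAm
  have hstep : ∀ (a : Fin n) (i : Fin d), f (σ a i) = f i + 1 := by
    intro a i
    obtain ⟨m, hm, hAm⟩ := exists_m i
    obtain ⟨L, hLlen, hLi⟩ := (reach m (c 1) i).1 hAm
    have hAm1 : 0 < (A ^ (m + 1)) (c 1) (σ a i) := by
      refine (reach _ _ _).2 ⟨L ++ [a], by simp [hLlen], ?_⟩
      rw [app_append, hLi, app_cons, app_nil]
    rw [hf (σ a i) (m + 1) (by omega) hAm1, hf i m hm hAm]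
    push_cast
    ring
  -- counting the fibres of f
  set N : ZMod h → ℕ := fun k => (Finset.univ.filter (fun i => f i = k)).card with hN
  have hNd : ∑ k : ZMod h, N k = d := by
    rw [← Finset.card_eq_sum_card_fiberwise (f := f) (fun i _ => Finset.mem_univ (f i))]
    simp
  have a0 : Fin n := ⟨0, by omega⟩
  have hNsucc : ∀ k : ZMod h, N k = N (k + 1) := by
    intro k
    apply Finset.card_bij (fun i _ => σ a0 i)
    · intro i hi
      simp only [Finset.mem_filter, Finset.mem_univ, true_and] at hi ⊢
      rw [hstep, hi]
    · intro i hi j hj hij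
      exact σinj a0 hij
    · intro j hj
      simp only [Finset.mem_filter, Finset.mem_univ, true_and] at hj
      obtain ⟨i, rfl⟩ := σsurj a0 j
      refine ⟨i, ?_, rfl⟩
      simp only [Finset.mem_filter, Finset.mem_univ, true_and]
      rw [hstep] at hj
      exact add_right_cancel hj
  have hNconst : ∀ k : ZMod h, N k = N 0 := by
    have hnat : ∀ m : ℕ, N ((m : ℕ) : ZMod h) = N 0 := by
      intro m
      induction m with
      | zero => simp
      | succ m ih =>
        push_cast
        rw [← hNsucc, ih]
    intro k
    have : (((k.val : ℕ)) : ZMod h) = k := ZMod.natCast_val k |>.trans (ZMod.cast_id _ _)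
    rw [← this, hnat]
  refine ⟨N 0, ?_⟩
  rw [← hNd, Finset.sum_congr rfl (fun k _ => hNconst k)]
  simp [ZMod.card h, mul_comm]
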